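/- Every instance with two agents admits a (2/3)-MMS allocation, i.e., a complete allocation x with u_i(x_i) ≥ (2/3)·MMS_i for i = 1, 2. -/

import Mathlib

open scoped BigOperators Classical

/-- An instance of fair division with subjective divisibility: `n` agents and `m` goods,
each good of total amount 1.  Each agent `i` assigns a nonnegative value `v i g` to each
good `g` and regards each good as either divisible or indivisible for her. -/
structure FairDivision (n m : ℕ) where
  /-- agent `i`'s value for good `g` -/
  v : Fin n → Fin m → ℝ
  v_nonneg : ∀ i g, 0 ≤ v i g
  /-- `divisible i g` means agent `i` regards good `g` as divisible -/
  divisible : Fin n → Fin m → Prop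

namespace FairDivision

variable {n m : ℕ}

/-- Agent `i`'s utility from receiving fraction `t ∈ [0,1]` of good `g`:
`t * v i g` if `g` is divisible for `i`; `v i g` if `g` is indivisible for `i` and `t = 1`;
and `0` if `g` is indivisible for `i` and `t < 1`. -/
noncomputable def frUtil (I : FairDivision n m) (i : Fin n) (g : Fin m) (t : ℝ) : ℝ :=
  if I.divisible i g then t * I.v i g else if t = 1 then I.v i g else 0

/-- Agent `i`'s (additive) utility for a bundle `b`, given by the fraction `b g` of each good. -/
noncomputable def util (I : FairDivision n m) (i : Fin n) (b : Fin m → ℝ) : ℝ :=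
  ∑ g, I.frUtil i g (b g)

/-- Agent `i`'s utility for the bundle `b` with good `g` omitted. -/
noncomputable def utilMinus (I : FairDivision n m) (i : Fin n) (b : Fin m → ℝ) (g : Fin m) : ℝ :=
  ∑ g' ∈ Finset.univ.erase g, I.frUtil i g' (b g')

/-- A complete allocation: fractions in `[0,1]` summing to `1` for every good. -/
def IsAllocation (I : FairDivision n m) (x : Fin n → Fin m → ℝ) : Prop :=
  (∀ i g, 0 ≤ x i g ∧ x i g ≤ 1) ∧ ∀ g, ∑ i, x i g = 1

/-- A partial allocation: fractions in `[0,1]` summing to at most `1` for every good. -/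
def IsPartialAllocation (I : FairDivision n m) (x : Fin n → Fin m → ℝ) : Prop :=
  (∀ i g, 0 ≤ x i g ∧ x i g ≤ 1) ∧ ∀ g, ∑ i, x i g ≤ 1

/-- The maximin share of agent `i`: the supremum, over all fractional `n`-partitions
`P` of the goods, of the minimum over the parts `P j` of agent `i`'s utility. -/
noncomputable def MMS (I : FairDivision n m) (i : Fin n) : ℝ :=
  sSup { r : ℝ | ∃ P : Fin n → Fin m → ℝ, I.IsAllocation P ∧ r = ⨅ j, I.util i (P j) }

/-- Non-wastefulness: every positive fraction an agent receives yields her positive utility. -/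
def NonWasteful (I : FairDivision n m) (x : Fin n → Fin m → ℝ) : Prop :=
  ∀ i g, 0 < x i g → 0 < I.frUtil i g (x i g)

/-- Envy-freeness. -/
def EF (I : FairDivision n m) (x : Fin n → Fin m → ℝ) : Prop :=
  ∀ i j, I.util i (x j) ≤ I.util i (x i)

/-- Envy-freeness for mixed goods: for all agents `i, j`, if every good `j` receives a
positive fraction of is indivisible for `i`, then `i` does not envy `j` after removing some
such good from `j`'s bundle; otherwise `i` does not envy `j`. -/
def EFM (I : FairDivision n m) (x : Fin n → Fin m → ℝ) : Prop :=
  ∀ i j,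
    ((∀ g, 0 < x j g → ¬ I.divisible i g) →
      ∃ g, 0 < x j g ∧ I.utilMinus i (x j) g ≤ I.util i (x i)) ∧
    ((¬ ∀ g, 0 < x j g → ¬ I.divisible i g) → I.util i (x j) ≤ I.util i (x i))

/-- EFXM: as EFM, but the envy must vanish after removing any positively valued such good. -/
def EFXM (I : FairDivision n m) (x : Fin n → Fin m → ℝ) : Prop :=
  ∀ i j,
    ((∀ g, 0 < x j g → ¬ I.divisible i g) →
      ∀ g, 0 < x j g → 0 < I.v i g → I.utilMinus i (x j) g ≤ I.util i (x i)) ∧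
    ((¬ ∀ g, 0 < x j g → ¬ I.divisible i g) → I.util i (x j) ≤ I.util i (x i))

/-- EF1M: if `j`'s bundle contains (a positive fraction of) some good that `i` regards as
indivisible and values positively, the envy of `i` must vanish after removing some such good;
otherwise `i` does not envy `j`. -/
def EF1M (I : FairDivision n m) (x : Fin n → Fin m → ℝ) : Prop :=
  ∀ i j,
    ((∃ g, 0 < x j g ∧ ¬ I.divisible i g ∧ 0 < I.v i g) →
      ∃ g, 0 < x j g ∧ ¬ I.divisible i g ∧ 0 < I.v i g ∧
        I.utilMinus i (x j) g ≤ I.util i (x i)) ∧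
    ((¬ ∃ g, 0 < x j g ∧ ¬ I.divisible i g ∧ 0 < I.v i g) → I.util i (x j) ≤ I.util i (x i))

/-- Pareto optimality (among complete allocations). -/
def ParetoOptimal (I : FairDivision n m) (x : Fin n → Fin m → ℝ) : Prop :=
  ¬ ∃ y, I.IsAllocation y ∧ (∀ i, I.util i (x i) ≤ I.util i (y i)) ∧
    ∃ i, I.util i (x i) < I.util i (y i)

/-- In a 3-agent instance, `B` (a set of whole goods) is a reducible bundle with respect to
agent `i`: `u_i(B) ≥ (2/3)·MMS_i`, `u_j(M∖B) ≥ 2·MMS_j` for some agent `j ≠ i`, and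
`u_k(M∖B) ≥ (4/3)·MMS_k` for the remaining agent `k`. -/
def IsReducible (I : FairDivision 3 m) (B : Finset (Fin m)) (i : Fin 3) : Prop :=
  2 / 3 * I.MMS i ≤ ∑ g ∈ B, I.v i g ∧
    ∃ j, j ≠ i ∧ 2 * I.MMS j ≤ ∑ g ∈ Bᶜ, I.v j g ∧
      ∀ k, k ≠ i → k ≠ j → 4 / 3 * I.MMS k ≤ ∑ g ∈ Bᶜ, I.v k g

end FairDivision

section TwoThirdsAux

open Finset

variable {m : ℕ} (I : FairDivision 2 m)

lemma frUtil_nonneg' (i : Fin 2) (g : Fin m) {t : ℝ} (ht : 0 ≤ t) :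
    0 ≤ I.frUtil i g t := by
  unfold FairDivision.frUtil
  split_ifs with h h1
  · exact mul_nonneg ht (I.v_nonneg i g)
  · exact I.v_nonneg i g
  · exact le_rfl

lemma frUtil_le' (i : Fin 2) (g : Fin m) {t : ℝ} (ht : t ≤ 1) :
    I.frUtil i g t ≤ I.v i g := by
  unfold FairDivision.frUtil
  split_ifs with h h1
  · exact mul_le_of_le_one_left (I.v_nonneg i g) ht
  · exact le_rfl
  · exact I.v_nonneg i g

lemma util_nonneg' (i : Fin 2) (b : Fin m → ℝ) (hb : ∀ g, 0 ≤ b g) :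
    0 ≤ I.util i b :=
  Finset.sum_nonneg fun g _ => frUtil_nonneg' I i g (hb g)

lemma util_eq_sum (i : Fin 2) (b : Fin m → ℝ)
    (h : ∀ g, I.divisible i g ∨ b g = 0 ∨ b g = 1) :
    I.util i b = ∑ g, b g * I.v i g := by
  unfold FairDivision.util
  refine Finset.sum_congr rfl fun g _ => ?_
  unfold FairDivision.frUtil
  rcases h g with h | h | h
  · rw [if_pos h]
  · rw [h]; split_ifs <;> simp_all
  · rw [h]; split_ifs <;> simp_all

lemma frUtil_pair_le (i : Fin 2) (g : Fin m) {a b : ℝ}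
    (ha : 0 ≤ a) (hb : 0 ≤ b) (hab : a + b = 1) :
    I.frUtil i g a + I.frUtil i g b ≤ I.v i g := by
  have hv := I.v_nonneg i g
  unfold FairDivision.frUtil
  split_ifs with h h1 h2 h2 <;> try nlinarith
  all_goals nlinarith

lemma mms_nonneg (i : Fin 2) : 0 ≤ I.MMS i := by
  have hmem : (⨅ j : Fin 2, I.util i (fun _ => (1:ℝ)/2)) ∈
      { r : ℝ | ∃ P : Fin 2 → Fin m → ℝ, I.IsAllocation P ∧ r = ⨅ j, I.util i (P j) } := by
    refine ⟨fun _ g => (1:ℝ)/2, ⟨fun i g => by norm_num, fun g => by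
      rw [Fin.sum_univ_two]; norm_num⟩, rfl⟩
  have hbdd : BddAbove { r : ℝ | ∃ P : Fin 2 → Fin m → ℝ, I.IsAllocation P ∧
      r = ⨅ j, I.util i (P j) } := by
    refine ⟨∑ g, I.v i g, fun r hr => ?_⟩
    obtain ⟨P, hP, rfl⟩ := hr
    have h0 : (⨅ j, I.util i (P j)) ≤ I.util i (P 0) :=
      ciInf_le (Set.finite_range _).bddBelow 0
    refine h0.trans (Finset.sum_le_sum fun g _ => frUtil_le' I i g (hP.1 0 g).2)
  have h0 : 0 ≤ ⨅ j : Fin 2, I.util i (fun _ => (1:ℝ)/2) :=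
    le_ciInf fun j => util_nonneg' I i _ (fun g => by norm_num)
  exact h0.trans (le_csSup hbdd hmem)

lemma mms_le_half (i : Fin 2) : I.MMS i ≤ (∑ g, I.v i g) / 2 := by
  refine Real.sSup_le (fun r hr => ?_) (by
    have h : (0:ℝ) ≤ ∑ g, I.v i g := Finset.sum_nonneg fun g _ => I.v_nonneg i g
    linarith)
  obtain ⟨P, hP, rfl⟩ := hr
  have hb : BddBelow (Set.range fun j => I.util i (P j)) := (Set.finite_range _).bddBelow
  have h0 : (⨅ j, I.util i (P j)) ≤ I.util i (P 0) := ciInf_le hb 0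
  have h1 : (⨅ j, I.util i (P j)) ≤ I.util i (P 1) := ciInf_le hb 1
  have hsum : I.util i (P 0) + I.util i (P 1) ≤ ∑ g, I.v i g := by
    unfold FairDivision.util
    rw [← Finset.sum_add_distrib]
    refine Finset.sum_le_sum fun g _ => ?_
    have := hP.2 g
    rw [Fin.sum_univ_two] at this
    exact frUtil_pair_le I i g (hP.1 0 g).1 (hP.1 1 g).1 this
  linarith

lemma mms_le_total_sub (i : Fin 2) (g0 : Fin m) (hind : ¬ I.divisible i g0) :
    I.MMS i ≤ (∑ g, I.v i g) - I.v i g0 := by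
  have hrest : (∑ g, I.v i g) - I.v i g0 = ∑ g ∈ Finset.univ.erase g0, I.v i g := by
    have := Finset.sum_erase_add Finset.univ (I.v i) (Finset.mem_univ g0)
    linarith
  refine Real.sSup_le (fun r hr => ?_) ?_
  · obtain ⟨P, hP, rfl⟩ := hr
    have hb : BddBelow (Set.range fun j => I.util i (P j)) := (Set.finite_range _).bddBelow
    have hsum1 : P 0 g0 + P 1 g0 = 1 := by
      have := hP.2 g0; rwa [Fin.sum_univ_two] at this
    -- one of the two parts does not wholly contain g0
    obtain ⟨j, hj⟩ : ∃ j : Fin 2, P j g0 ≠ 1 := by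
      by_contra h
      push_neg at h
      rw [h 0, h 1] at hsum1
      norm_num at hsum1
    have hle : I.util i (P j) ≤ ∑ g ∈ Finset.univ.erase g0, I.v i g := by
      unfold FairDivision.util
      rw [← Finset.sum_erase_add Finset.univ _ (Finset.mem_univ g0)]
      have hz : I.frUtil i g0 (P j g0) = 0 := by
        unfold FairDivision.frUtil
        rw [if_neg hind, if_neg hj]
      rw [hz, add_zero]
      exact Finset.sum_le_sum fun g _ => frUtil_le' I i g (hP.1 j g).2
    exact (ciInf_le hb j).trans (hle.trans_eq hrest.symm)
  · rw [hrest]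
    exact Finset.sum_nonneg fun g _ => I.v_nonneg i g

/-- Discrete/continuous splitting lemma. -/
lemma exists_split (w : Fin m → ℝ) (P : Fin m → Prop) (c lo hi : ℝ)
    (hw : ∀ g, 0 ≤ w g) (hc : ∀ g, ¬ P g → w g ≤ c) (hc0 : 0 ≤ c)
    (hlo : 0 ≤ lo) (hwidth : lo + c ≤ hi) :
    ∀ s : Finset (Fin m), lo ≤ ∑ g ∈ s, w g →
    ∃ x : Fin m → ℝ, (∀ g, 0 ≤ x g ∧ x g ≤ 1) ∧ (∀ g, g ∉ s → x g = 0) ∧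
      (∀ g, ¬ P g → x g = 0 ∨ x g = 1) ∧
      lo ≤ ∑ g ∈ s, x g * w g ∧ ∑ g ∈ s, x g * w g ≤ hi := by
  intro s
  induction s using Finset.induction_on with
  | empty =>
    intro htot
    simp only [Finset.sum_empty] at htot ⊢
    exact ⟨fun _ => 0, fun g => by norm_num, fun g _ => rfl,
      fun g _ => Or.inl rfl, by linarith, by linarith⟩
  | @insert g s hg ih =>
    intro htot
    by_cases hls : lo ≤ ∑ g' ∈ s, w g'
    · obtain ⟨x, hx1, hx2, hx3, hx4, hx5⟩ := ih hls
      refine ⟨x, hx1, fun g' hg' => hx2 g' (fun h => hg' (Finset.mem_insert_of_mem h)),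
        hx3, ?_, ?_⟩
      · rw [Finset.sum_insert hg, hx2 g hg, zero_mul, zero_add]; exact hx4
      · rw [Finset.sum_insert hg, hx2 g hg, zero_mul, zero_add]; exact hx5
    · push_neg at hls
      rw [Finset.sum_insert hg] at htot
      set t := ∑ g' ∈ s, w g' with ht
      have ht0 : 0 ≤ t := Finset.sum_nonneg fun g' _ => hw g'
      have hτex : ∃ τ : ℝ, 0 ≤ τ ∧ τ ≤ 1 ∧ (¬ P g → τ = 0 ∨ τ = 1) ∧
          lo ≤ τ * w g + t ∧ τ * w g + t ≤ hi := by
        by_cases hP : P g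
        · have hwg : 0 < w g := by
            by_contra h
            push_neg at h
            have : w g = 0 := le_antisymm h (hw g)
            rw [this] at htot; linarith
          refine ⟨(lo - t) / w g, div_nonneg (by linarith) hwg.le, ?_, fun h => absurd hP h, ?_, ?_⟩
          · rw [div_le_one hwg]; linarith
          · rw [div_mul_cancel₀ _ (ne_of_gt hwg)]; linarith
          · rw [div_mul_cancel₀ _ (ne_of_gt hwg)]; linarith
        · refine ⟨1, zero_le_one, le_rfl, fun _ => Or.inr rfl, by linarith, ?_⟩
          have := hc g hP
          linarith
      obtain ⟨τ, hτ0, hτ1, hτi, hτlo, hτhi⟩ := hτex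
      refine ⟨fun g' => if g' ∈ s then 1 else if g' = g then τ else 0, ?_, ?_, ?_, ?_, ?_⟩
      · intro g'; dsimp only; split_ifs <;> simp [hτ0, hτ1]
      · intro g' hg'
        dsimp only
        rw [if_neg (fun h => hg' (Finset.mem_insert_of_mem h)),
          if_neg (fun h => hg' (by rw [h]; exact Finset.mem_insert_self g s))]
      · intro g' hg'
        dsimp only
        split_ifs with h1 h2
        · exact Or.inr rfl
        · subst h2; exact hτi hg'
        · exact Or.inl rfl
      · rw [Finset.sum_insert hg]
        dsimp only
        rw [if_neg hg, if_pos rfl]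
        have hxs : ∑ g' ∈ s, (if g' ∈ s then (1:ℝ) else if g' = g then τ else 0) * w g'
            = ∑ g' ∈ s, w g' := Finset.sum_congr rfl fun g' hg' => by rw [if_pos hg', one_mul]
        rw [hxs]; exact hτlo
      · rw [Finset.sum_insert hg]
        dsimp only
        rw [if_neg hg, if_pos rfl]
        have hxs : ∑ g' ∈ s, (if g' ∈ s then (1:ℝ) else if g' = g then τ else 0) * w g'
            = ∑ g' ∈ s, w g' := Finset.sum_congr rfl fun g' hg' => by rw [if_pos hg', one_mul]
        rw [hxs]; exact hτhi

/-- Packaging a pair of complementary bundles into an allocation. -/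
lemma pair_alloc (x : Fin m → ℝ) (hx : ∀ g, 0 ≤ x g ∧ x g ≤ 1)
    (h0 : 2 / 3 * I.MMS 0 ≤ I.util 0 x)
    (h1 : 2 / 3 * I.MMS 1 ≤ I.util 1 (fun g => 1 - x g)) :
    ∃ z, I.IsAllocation z ∧ ∀ i, 2 / 3 * I.MMS i ≤ I.util i (z i) := by
  refine ⟨fun j g => if j = 0 then x g else 1 - x g, ⟨fun i g => ?_, fun g => ?_⟩, fun i => ?_⟩
  · dsimp only
    split_ifs
    · exact hx g
    · constructor <;> [linarith [(hx g).2]; linarith [(hx g).1]]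
  · rw [Fin.sum_univ_two]
    norm_num
  · fin_cases i
    · simpa using h0
    · simpa using h1

end TwoThirdsAux

section TwoThirdsMain

variable {m : ℕ} (I : FairDivision 2 m)

lemma util_indicator (i : Fin 2) (g0 : Fin m) :
    I.util i (fun g => if g = g0 then (1:ℝ) else 0) = I.v i g0 := by
  rw [util_eq_sum I i _ (fun g => Or.inr (by split_ifs <;> simp))]
  simp [ite_mul]

lemma util_coindicator (i : Fin 2) (g0 : Fin m) :
    I.util i (fun g => 1 - if g = g0 then (1:ℝ) else 0) = (∑ g, I.v i g) - I.v i g0 := by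
  rw [util_eq_sum I i _ (fun g => Or.inr (by split_ifs <;> simp))]
  have : ∀ g : Fin m, (1 - if g = g0 then (1:ℝ) else 0) * I.v i g
      = I.v i g - (if g = g0 then (1:ℝ) else 0) * I.v i g := fun g => by ring
  simp only [this, Finset.sum_sub_distrib]
  congr 1
  simp [ite_mul]

end TwoThirdsMain

/-- Every instance with two agents admits a (2/3)-MMS allocation. -/
theorem two_agent_two_thirds_mms (m : ℕ) (I : FairDivision 2 m) :
    ∃ x, I.IsAllocation x ∧ ∀ i, 2 / 3 * I.MMS i ≤ I.util i (x i) := by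
  classical
  set M0 := ∑ g, I.v 0 g with hM0def
  set M1 := ∑ g, I.v 1 g with hM1def
  have hM0 : 0 ≤ M0 := Finset.sum_nonneg fun g _ => I.v_nonneg 0 g
  have hM1 : 0 ≤ M1 := Finset.sum_nonneg fun g _ => I.v_nonneg 1 g
  have hα0 := mms_nonneg I 0
  have hα1 := mms_nonneg I 1
  have hh0 := mms_le_half I 0
  have hh1 := mms_le_half I 1
  rw [← hM0def] at hh0
  rw [← hM1def] at hh1
  by_cases hbig : ∃ g, ¬(I.divisible 0 g ∧ I.divisible 1 g) ∧ M0 / 3 < I.v 0 g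
  · obtain ⟨g0, hnd, hv⟩ := hbig
    have hind : I.util 0 (fun g => if g = g0 then (1:ℝ) else 0) = I.v 0 g0 :=
      util_indicator I 0 g0
    have hind1 : I.util 1 (fun g => if g = g0 then (1:ℝ) else 0) = I.v 1 g0 :=
      util_indicator I 1 g0
    have hco0 : I.util 0 (fun g => 1 - if g = g0 then (1:ℝ) else 0) = M0 - I.v 0 g0 :=
      util_coindicator I 0 g0
    have hco1 : I.util 1 (fun g => 1 - if g = g0 then (1:ℝ) else 0) = M1 - I.v 1 g0 :=
      util_coindicator I 1 g0
    by_cases hA : 2 / 3 * I.MMS 0 ≤ M0 - I.v 0 g0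
    · by_cases hpick : M1 / 2 ≤ I.v 1 g0
      · -- agent 1 gets {g0}, agent 0 gets the rest
        refine pair_alloc I (fun g => 1 - if g = g0 then (1:ℝ) else 0)
          (fun g => by split_ifs <;> norm_num) (by rw [hco0]; exact hA) ?_
        have hfn : (fun g : Fin m => 1 - (1 - if g = g0 then (1:ℝ) else 0))
            = fun g => if g = g0 then (1:ℝ) else 0 := funext fun g => by ring
        rw [hfn, hind1]
        linarith
      · -- agent 0 gets {g0}, agent 1 gets the rest
        refine pair_alloc I (fun g => if g = g0 then (1:ℝ) else 0)
          (fun g => by split_ifs <;> norm_num) ?_ ?_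
        · rw [hind]; linarith
        · rw [hco1]; linarith
    · -- g0 must be divisible for agent 0, hence indivisible for agent 1
      push_neg at hA
      have hd0 : I.divisible 0 g0 := by
        by_contra h
        have := mms_le_total_sub I 0 g0 h
        rw [← hM0def] at this
        linarith
      have hd1 : ¬ I.divisible 1 g0 := fun h => hnd ⟨hd0, h⟩
      have h2 := mms_le_total_sub I 1 g0 hd1
      rw [← hM1def] at h2
      refine pair_alloc I (fun g => if g = g0 then (1:ℝ) else 0)
        (fun g => by split_ifs <;> norm_num) ?_ ?_
      · rw [hind]; linarith
      · rw [hco1]; linarith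
  · push_neg at hbig
    obtain ⟨x, hx1, _, hx3, hx4, hx5⟩ :=
      exists_split (I.v 0) (fun g => I.divisible 0 g ∧ I.divisible 1 g)
        (M0 / 3) (M0 / 3) (2 * M0 / 3) (I.v_nonneg 0) (fun g hg => hbig g fun h1 h2 => hg ⟨h1, h2⟩) (by linarith) (by linarith)
        (by linarith) Finset.univ (by simp only [← hM0def]; linarith)
    have hint0 : ∀ g, ¬ I.divisible 0 g → (x g = 0 ∨ x g = 1) :=
      fun g h => hx3 g fun hb => h hb.1
    have hint1 : ∀ g, ¬ I.divisible 1 g → (x g = 0 ∨ x g = 1) :=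
      fun g h => hx3 g fun hb => h hb.2
    have hu0x : I.util 0 x = ∑ g, x g * I.v 0 g := by
      refine util_eq_sum I 0 x fun g => ?_
      by_cases h : I.divisible 0 g
      · exact Or.inl h
      · exact Or.inr (hint0 g h)
    have hu0y : I.util 0 (fun g => 1 - x g) = ∑ g, (1 - x g) * I.v 0 g := by
      refine util_eq_sum I 0 _ fun g => ?_
      by_cases h : I.divisible 0 g
      · exact Or.inl h
      · rcases hint0 g h with h' | h' <;> [right; right] <;> rw [h'] <;> norm_num
    have hu1x : I.util 1 x = ∑ g, x g * I.v 1 g := by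
      refine util_eq_sum I 1 x fun g => ?_
      by_cases h : I.divisible 1 g
      · exact Or.inl h
      · exact Or.inr (hint1 g h)
    have hu1y : I.util 1 (fun g => 1 - x g) = ∑ g, (1 - x g) * I.v 1 g := by
      refine util_eq_sum I 1 _ fun g => ?_
      by_cases h : I.divisible 1 g
      · exact Or.inl h
      · rcases hint1 g h with h' | h' <;> [right; right] <;> rw [h'] <;> norm_num
    have hsub0 : ∑ g, (1 - x g) * I.v 0 g = M0 - ∑ g, x g * I.v 0 g := by
      rw [hM0def]
      rw [← Finset.sum_sub_distrib]
      exact Finset.sum_congr rfl fun g _ => by ring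
    have hsub1 : ∑ g, (1 - x g) * I.v 1 g = M1 - ∑ g, x g * I.v 1 g := by
      rw [hM1def]
      rw [← Finset.sum_sub_distrib]
      exact Finset.sum_congr rfl fun g _ => by ring
    by_cases hpick : M1 / 2 ≤ I.util 1 (fun g => 1 - x g)
    · -- agent 0 gets x, agent 1 gets 1 - x
      refine pair_alloc I x hx1 ?_ ?_
      · rw [hu0x]; linarith
      · linarith
    · -- agent 0 gets 1 - x, agent 1 gets x
      push_neg at hpick
      refine pair_alloc I (fun g => 1 - x g)
        (fun g => ⟨show (0:ℝ) ≤ 1 - x g by linarith [(hx1 g).2],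
          show (1:ℝ) - x g ≤ 1 by linarith [(hx1 g).1]⟩) ?_ ?_
      · rw [hu0y, hsub0]; linarith
      · have hfn : (fun g : Fin m => 1 - (1 - x g)) = x := funext fun g => by ring
        rw [hfn, hu1x]
        rw [hu1y, hsub1] at hpick
        linarith
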